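/- Let p be a prime, k a field of characteristic p, and A a unital associative k-algebra. For n ≥ 2 let b_n : A^{⊗n} → A^{⊗(n−1)} be the unsigned bar map b_n(a_1⊗⋯⊗a_n) = ∑_{j=1}^{n−1} a_1⊗⋯⊗a_j a_{j+1}⊗⋯⊗a_n, and set b_1 = 0. Then for every n ≥ 1 the p-fold composite b_{n+1}∘b_{n+2}∘⋯∘b_{n+p} : A^{⊗(n+p)} → A^{⊗n} is the zero map. (Mayer's unsigned bar differential ∂_H satisfies ∂_H^p = 0.) -/

import Mathlib

open TensorProduct

universe u

/-- `Tpow2M k A n` is the `(n+1)`-fold tensor power `A^{⊗(n+1)}` over `k`. -/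
noncomputable def Tpow2M (k A : Type u) [CommRing k] [Ring A] [Algebra k A] :
    ℕ → ModuleCat.{u} k
  | 0 => ModuleCat.of k A
  | (n + 1) => ModuleCat.of k (TensorProduct k A (Tpow2M k A n))

variable (k A : Type u) [CommRing k] [Ring A] [Algebra k A]

/-- The unsigned bar map `b_{n+2} : A^{⊗(n+2)} → A^{⊗(n+1)}`,
`a_1⊗⋯⊗a_m ↦ ∑_j a_1⊗⋯⊗a_j a_{j+1}⊗⋯⊗a_m` (no signs), defined recursively by
`b(a ⊗ x) = (mult on the first two factors)(a ⊗ x) + a ⊗ b(x)`. -/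
noncomputable def bar2Map : (n : ℕ) → (↥(Tpow2M k A (n + 1)) →ₗ[k] ↥(Tpow2M k A n))
  | 0 => LinearMap.mul' k A
  | (n + 1) =>
      ((LinearMap.rTensor (↥(Tpow2M k A n)) (LinearMap.mul' k A)
          ∘ₗ (TensorProduct.assoc k A A (↥(Tpow2M k A n))).symm.toLinearMap)
        + (LinearMap.lTensor A (bar2Map n) :
            A ⊗[k] (A ⊗[k] ↥(Tpow2M k A n)) →ₗ[k] A ⊗[k] ↥(Tpow2M k A n)))

/-- The `m`-fold composite `b_{n+2} ∘ b_{n+3} ∘ ⋯ ∘ b_{n+m+1} : A^{⊗(n+m+1)} → A^{⊗(n+1)}`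
of unsigned bar maps. -/
noncomputable def bar2Comp : (n m : ℕ) → (↥(Tpow2M k A (n + m)) →ₗ[k] ↥(Tpow2M k A n))
  | _, 0 => LinearMap.id
  | n, (m + 1) => bar2Comp n m ∘ₗ bar2Map k A (n + m)

noncomputable def FM : (n : ℕ) → (A ⊗[k] ↥(Tpow2M k A n) →ₗ[k] ↥(Tpow2M k A n))
  | 0 => LinearMap.mul' k A
  | (n + 1) =>
      (LinearMap.rTensor (↥(Tpow2M k A n)) (LinearMap.mul' k A)
          ∘ₗ (TensorProduct.assoc k A A (↥(Tpow2M k A n))).symm.toLinearMap :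
        A ⊗[k] (A ⊗[k] ↥(Tpow2M k A n)) →ₗ[k] A ⊗[k] ↥(Tpow2M k A n))

noncomputable def Sc : (n N : ℕ) → (↥(Tpow2M k A N) →ₗ[k] ↥(Tpow2M k A n))
  | 0, 0 => LinearMap.id
  | (_ + 1), 0 => 0
  | 0, (N + 1) => FM k A 0 ∘ₗ
      (LinearMap.lTensor A (Sc 0 N) : A ⊗[k] ↥(Tpow2M k A N) →ₗ[k] A ⊗[k] ↥(Tpow2M k A 0))
  | (n + 1), (N + 1) =>
      (LinearMap.lTensor A (Sc n N) : A ⊗[k] ↥(Tpow2M k A N) →ₗ[k] A ⊗[k] ↥(Tpow2M k A n))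
      + (FM k A (n + 1) ∘ₗ
        (LinearMap.lTensor A (Sc (n + 1) N) :
          A ⊗[k] ↥(Tpow2M k A N) →ₗ[k] A ⊗[k] ↥(Tpow2M k A (n + 1))) :
          A ⊗[k] ↥(Tpow2M k A N) →ₗ[k] A ⊗[k] ↥(Tpow2M k A n))

lemma Tpow_induction (n : ℕ) {P : ↥(Tpow2M k A (n + 1)) → Prop} (z : ↥(Tpow2M k A (n + 1)))
    (zero : P 0) (tmul : ∀ (a : A) (x : ↥(Tpow2M k A n)), P (a ⊗ₜ[k] x))
    (add : ∀ y z, P y → P z → P (y + z)) : P z :=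
  TensorProduct.induction_on z zero tmul add

lemma FM_zero_apply (a : A) (w : ↥(Tpow2M k A 0)) :
    FM k A 0 (a ⊗ₜ[k] w) = @HMul.hMul A A A instHMul a w := rfl

lemma FM_succ_apply (n : ℕ) (a b : A) (x : ↥(Tpow2M k A n)) :
    FM k A (n + 1) (a ⊗ₜ[k] (b ⊗ₜ[k] x : ↥(Tpow2M k A (n + 1)))) =
      ((a * b) ⊗ₜ[k] x : ↥(Tpow2M k A (n + 1))) := rfl

lemma bar2Map_zero_apply (a : A) (w : ↥(Tpow2M k A 0)) :
    bar2Map k A 0 (a ⊗ₜ[k] w) = @HMul.hMul A A A instHMul a w := rfl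

lemma bar2Map_succ_apply (n : ℕ) (a : A) (y : ↥(Tpow2M k A (n + 1))) :
    bar2Map k A (n + 1) (a ⊗ₜ[k] y : ↥(Tpow2M k A (n + 2))) =
      Add.add (FM k A (n + 1) (a ⊗ₜ[k] y)) (a ⊗ₜ[k] bar2Map k A n y) := rfl

lemma Sc_zero_succ_apply (N : ℕ) (a : A) (x : ↥(Tpow2M k A N)) :
    Sc k A 0 (N + 1) (a ⊗ₜ[k] x : ↥(Tpow2M k A (N + 1))) =
      @HMul.hMul A A A instHMul a (Sc k A 0 N x) := rfl

lemma Sc_succ_succ_apply (n N : ℕ) (a : A) (x : ↥(Tpow2M k A N)) :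
    Sc k A (n + 1) (N + 1) (a ⊗ₜ[k] x : ↥(Tpow2M k A (N + 1))) =
      Add.add (a ⊗ₜ[k] Sc k A n N x : A ⊗[k] ↥(Tpow2M k A n))
        (FM k A (n + 1) (a ⊗ₜ[k] Sc k A (n + 1) N x)) := rfl

lemma FM_assoc (n : ℕ) (a b : A) (w : ↥(Tpow2M k A n)) :
    FM k A n (a ⊗ₜ[k] FM k A n (b ⊗ₜ[k] w)) = FM k A n ((a * b) ⊗ₜ[k] w) := by
  induction n with
  | zero =>
    rw [FM_zero_apply, FM_zero_apply, FM_zero_apply]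
    exact (mul_assoc a b w).symm
  | succ n ih =>
    induction w using Tpow_induction k A n with
    | zero => simp
    | tmul c x => rw [FM_succ_apply, FM_succ_apply, FM_succ_apply, mul_assoc]
    | add y z hy hz => simp only [tmul_add, map_add, hy, hz]

lemma Sc_vanish : ∀ N n : ℕ, N < n → Sc k A n N = 0 := by
  intro N
  induction N with
  | zero =>
    rintro (_ | n) h
    · omega
    · rfl
  | succ N ih =>
    rintro (_ | n) h
    · omega
    · have h1 : Sc k A n N = 0 := ih n (by omega)
      have h2 : Sc k A (n + 1) N = 0 := ih (n + 1) (by omega)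
      show (LinearMap.lTensor A (Sc k A n N) : _ →ₗ[k] _) + _ = 0
      rw [h1, h2]
      simp [Sc]
      exact LinearMap.comp_zero _

lemma Sc_diag : ∀ n : ℕ, Sc k A n n = LinearMap.id := by
  intro n
  induction n with
  | zero => rfl
  | succ n ih =>
    have h2 : Sc k A (n + 1) n = 0 := Sc_vanish k A n (n + 1) (by omega)
    show (LinearMap.lTensor A (Sc k A n n) : _ →ₗ[k] _) + _ = LinearMap.id
    rw [ih, h2]
    simp
    exact (congrArg (LinearMap.id + ·) (LinearMap.comp_zero _)).trans (add_zero _)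

lemma addEq {M : Type u} [Add M] (x y : M) : Add.add x y = x + y := rfl

lemma Sc_bar : ∀ (N n : ℕ) (z : ↥(Tpow2M k A (N + 1))),
    Sc k A n N (bar2Map k A N z) = (N + 1 - n) • Sc k A n (N + 1) z := by
  intro N
  induction N with
  | zero =>
    intro n z
    induction z using Tpow_induction k A 0 with
    | zero => simp
    | tmul a w =>
      rw [bar2Map_zero_apply]
      cases n with
      | zero =>
        rw [Sc_zero_succ_apply]
        show Sc k A 0 0 _ = (0 + 1 - 0) • _
        simp only [Sc, LinearMap.id_apply, Nat.sub_zero, zero_add, one_smul]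
        exact (one_smul ℕ _).symm
      | succ m =>
        show Sc k A (m + 1) 0 _ = (0 + 1 - (m + 1)) • _
        rw [show Sc k A (m + 1) 0 = 0 from rfl,
          show 0 + 1 - (m + 1) = 0 from by omega]
        simp
        rfl
    | add y z hy hz => simp only [map_add, hy, hz, smul_add]
  | succ N ih =>
    intro n z
    induction z using Tpow_induction k A (N + 1) with
    | zero => simp
    | add y z hy hz => simp only [map_add, hy, hz, smul_add]
    | tmul a y =>
      induction y using Tpow_induction k A N with
      | zero =>
        simp only [tmul_zero]
        show Sc k A n (N + 1) (bar2Map k A (N + 1) 0) = (N + 1 + 1 - n) • Sc k A n (N + 1 + 1) 0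
        simp only [tmul_zero, map_zero, smul_zero]
      | add y₁ y₂ h₁ h₂ =>
        rw [tmul_add]
        erw [map_add (bar2Map k A (N + 1)), map_add (Sc k A n (N + 1)), h₁, h₂,
          map_add (Sc k A n (N + 1 + 1)), smul_add]
      | tmul b x =>
        erw [bar2Map_succ_apply k A N a (b ⊗ₜ[k] x), addEq, FM_succ_apply k A N a b x, map_add]
        cases n with
        | zero =>
          erw [Sc_zero_succ_apply, Sc_zero_succ_apply, Sc_zero_succ_apply,
            ih 0 ((b ⊗ₜ[k] x : ↥(Tpow2M k A (N + 1))))]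
          rw [Sc_zero_succ_apply]
          rw [show (N + 1 + 1 - 0) = (N + 1) + 1 from by omega,
            show (N + 1 - 0) = N + 1 from by omega]
          have key : ∀ s : A, a * b * s + a * ((N + 1) • (b * s)) = (N + 1 + 1) • (a * (b * s)) := by
            intro s
            rw [mul_smul_comm, mul_assoc]
            conv_rhs => rw [succ_nsmul]
            rw [add_comm]
          exact key _
        | succ m =>
          erw [Sc_succ_succ_apply, Sc_succ_succ_apply, Sc_succ_succ_apply,
            addEq, addEq, addEq,
            ih m ((b ⊗ₜ[k] x : ↥(Tpow2M k A (N + 1)))),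
            ih (m + 1) ((b ⊗ₜ[k] x : ↥(Tpow2M k A (N + 1))))]
          have hRb : Add.add ((a * b) ⊗ₜ[k] Sc k A m N x : A ⊗[k] ↥(Tpow2M k A m))
                (FM k A (m + 1) ((a * b) ⊗ₜ[k] Sc k A (m + 1) N x))
              = FM k A (m + 1)
                  (a ⊗ₜ[k] Sc k A (m + 1) (N + 1) (b ⊗ₜ[k] x : ↥(Tpow2M k A (N + 1)))) := by
            erw [Sc_succ_succ_apply]
            erw [addEq, addEq]
            erw [tmul_add, map_add, FM_succ_apply, FM_assoc]
            rfl
          erw [addEq] at hRb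
          simp only [tmul_smul, map_nsmul]
          erw [show (N + 1 + 1 - (m + 1)) = N + 1 - m from by omega,
            show (N + 1 - (m + 1)) = N - m from by omega]
          rcases le_or_gt m N with h | h
          · erw [show N + 1 - m = (N - m) + 1 from by omega]
            erw [smul_add, succ_nsmul, succ_nsmul, ← hRb]
            abel
          · erw [show N + 1 - m = 0 from by omega, show N - m = 0 from by omega,
              Sc_vanish k A N m (by omega), Sc_vanish k A N (m + 1) (by omega)]
            simp
            exact ((add_zero _).trans (add_zero _)).trans (zero_nsmul _).symm

lemma Sc_bar_comp (N n : ℕ) :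
    Sc k A n N ∘ₗ bar2Map k A N = (N + 1 - n) • Sc k A n (N + 1) :=
  LinearMap.ext fun z => Sc_bar k A N n z

lemma bar2Comp_eq : ∀ (m n : ℕ),
    bar2Comp k A n m = m.factorial • Sc k A n (n + m) := by
  intro m
  induction m with
  | zero =>
    intro n
    show LinearMap.id = Nat.factorial 0 • Sc k A n n
    rw [Sc_diag]
    simp
  | succ m ih =>
    intro n
    show bar2Comp k A n m ∘ₗ bar2Map k A (n + m) = _
    rw [ih n, LinearMap.smul_comp, Sc_bar_comp, smul_smul,
      show n + m + 1 - n = m + 1 from by omega,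
      show m.factorial * (m + 1) = (m + 1).factorial from by
        rw [Nat.factorial_succ, Nat.mul_comm]]
    rfl

/-- Mayer: over a field of characteristic `p`, any `p`-fold composite
`b_{n+1} ∘ b_{n+2} ∘ ⋯ ∘ b_{n+p} : A^{⊗(n+p)} → A^{⊗n}` (`n ≥ 1`) of unsigned bar maps
is zero; i.e. `∂_H^p = 0`.  (Here `A^{⊗(n+1)} = Tpow2M k A n`, so `n` below is the `n−1`
of the informal statement.) -/
theorem stmt_2 (p : ℕ) (hp : p.Prime) (k A : Type u) [Field k] [CharP k p]
    [Ring A] [Algebra k A] :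
    ∀ n : ℕ, bar2Comp k A n p = 0 := by
  intro n
  rw [bar2Comp_eq k A p n, ← Nat.cast_smul_eq_nsmul k,
    show ((p.factorial : ℕ) : k) = 0 from
      (CharP.cast_eq_zero_iff k p _).mpr (Nat.dvd_factorial hp.pos le_rfl),
    zero_smul]
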